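/- Let q be a prime power and let r and n be positive integers such that r+1 divides n. Then C_q(n, n − n/(r+1), r) = (q^n − 1)/(q^{n/(r+1)} − 1). -/

import Mathlib

open Module

/-- `C` is a `q`-covering design `C_q(n,k,r)`: a set of `k`-dimensional subspaces of
`F^n` such that every `r`-dimensional subspace is contained in at least one of them. -/
def IsCoveringDesign (F : Type) [Field F] (n k r : ℕ)
    (C : Finset (Submodule F (Fin n → F))) : Prop :=
  (∀ U ∈ C, finrank F ↥U = k) ∧
  ∀ W : Submodule F (Fin n → F), finrank F ↥W = r → ∃ U ∈ C, W ≤ U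

/-- `𝒞_q(n,k,r)`: the minimum size of a `q`-covering design `C_q(n,k,r)`. -/
noncomputable def minCoverSize (F : Type) [Field F] (n k r : ℕ) : ℕ :=
  sInf {M | ∃ C : Finset (Submodule F (Fin n → F)), IsCoveringDesign F n k r C ∧ C.card = M}

open Polynomial Finset


/-- rank of image under quotient map, when the kernel is inside the submodule. -/
lemma finrank_map_mkQ_add {F V : Type} [Field F] [AddCommGroup V] [Module F V]
    [FiniteDimensional F V] {p U : Submodule F V} (h : p ≤ U) :
    finrank F ↥(Submodule.map p.mkQ U) + finrank F ↥p = finrank F ↥U := by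
  have key := LinearMap.finrank_range_add_finrank_ker (p.mkQ.comp U.subtype)
  have h1 : LinearMap.range (p.mkQ.comp U.subtype) = Submodule.map p.mkQ U := by
    rw [LinearMap.range_comp, Submodule.range_subtype]
  have h2 : LinearMap.ker (p.mkQ.comp U.subtype) = Submodule.comap U.subtype p := by
    rw [LinearMap.ker_comp, Submodule.ker_mkQ]
  have h3 : finrank F ↥(Submodule.comap U.subtype p) = finrank F ↥p :=
    LinearEquiv.finrank_eq (Submodule.comapSubtypeEquivOfLe h)
  rw [h1, h2, h3] at key
  exact key

lemma arith_step (X Y Nj Ccard : ℕ) (hX : 2 ≤ X) (hY : 2 ≤ Y) (hNj : 1 ≤ Nj)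
    (h : (X * Y - 1) * Nj ≤ Ccard * (X - 1)) : Y * Nj + 1 ≤ Ccard := by
  by_contra hc
  push_neg at hc
  have h2 : Ccard ≤ Y * Nj := by omega
  have h4 : (X * Y - 1) * Nj ≤ (Y * Nj) * (X - 1) :=
    le_trans h (Nat.mul_le_mul_right _ h2)
  have hXY : (1:ℕ) ≤ X * Y := le_trans (by omega) (Nat.mul_le_mul hX hY)
  have h5 : ((X:ℤ) * Y - 1) * Nj ≤ ((Y:ℤ) * Nj) * ((X:ℤ) - 1) := by
    have := h4
    zify [hXY, (show (1:ℕ) ≤ X by omega)] at this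
    linarith
  have hNj' : (1:ℤ) ≤ (Nj:ℤ) := by exact_mod_cast hNj
  have hY' : (2:ℤ) ≤ (Y:ℤ) := by exact_mod_cast hY
  nlinarith

lemma cover_lower_bound (F : Type) [Field F] [Fintype F] (a m : ℕ) (hm : 0 < m) :
    ∀ (j : ℕ) (V : Type) [AddCommGroup V] [Module F V] [FiniteDimensional F V],
      finrank F V = a + j + m →
      ∀ C : Finset (Submodule F V), (∀ U ∈ C, finrank F ↥U = a + j) →
      (∀ W : Submodule F V, finrank F ↥W = j → ∃ U ∈ C, W ≤ U) →
      (∑ i ∈ Finset.range (j + 1), (Fintype.card F ^ m) ^ i) ≤ C.card := by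
  intro j
  induction j with
  | zero =>
    intro V _ _ _ hV C hdim hcov
    obtain ⟨U, hU, -⟩ := hcov ⊥ (by simp)
    simpa using Finset.card_pos.mpr ⟨U, hU⟩
  | succ j ih =>
    intro V _ _ _ hV C hdim hcov
    classical
    set q := Fintype.card F with hqdef
    have hq : 1 < q := Fintype.one_lt_card
    haveI : Finite V := Module.finite_of_finite F
    haveI : Fintype V := Fintype.ofFinite V
    set Nj := ∑ i ∈ Finset.range (j + 1), (q ^ m) ^ i with hNjdef
    have hNj1 : 1 ≤ Nj := by
      rw [hNjdef]
      calc 1 = (q^m)^0 := by norm_num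
        _ ≤ _ := Finset.single_le_sum (f := fun i => (q^m)^i) (fun i _ => Nat.zero_le _)
              (Finset.mem_range.mpr (Nat.succ_pos j))
    -- per-vector bound
    have key : ∀ v : V, v ≠ 0 → Nj ≤ (C.filter (fun U => v ∈ U)).card := by
      intro v hv
      set p := Submodule.span F {v} with hpdef
      have hp1 : finrank F ↥p = 1 := finrank_span_singleton hv
      have hQ : finrank F (V ⧸ p) = a + j + m := by
        have := Submodule.finrank_quotient_add_finrank p
        omega
      set C' := (C.filter (fun U => v ∈ U)).image (Submodule.map p.mkQ) with hC'def
      have h1 : ∀ U' ∈ C', finrank F ↥U' = a + j := by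
        intro U' hU'
        obtain ⟨U, hU, rfl⟩ := Finset.mem_image.mp hU'
        obtain ⟨hUC, hvU⟩ := Finset.mem_filter.mp hU
        have hpU : p ≤ U := by
          rw [hpdef, Submodule.span_le, Set.singleton_subset_iff]; exact hvU
        have := finrank_map_mkQ_add hpU
        have hU' := hdim U hUC
        omega
      have h2 : ∀ W' : Submodule F (V ⧸ p), finrank F ↥W' = j → ∃ U' ∈ C', W' ≤ U' := by
        intro W' hW'
        set W := Submodule.comap p.mkQ W' with hWdef
        have hpW : p ≤ W := by
          intro x hx
          simp only [hWdef, Submodule.mem_comap]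
          have : p.mkQ x = 0 := by rwa [← Submodule.ker_mkQ p, LinearMap.mem_ker] at hx
          rw [this]; exact W'.zero_mem
        have hmapW : Submodule.map p.mkQ W = W' :=
          Submodule.map_comap_eq_of_surjective p.mkQ_surjective W'
        have hrW : finrank F ↥W = j + 1 := by
          have := finrank_map_mkQ_add hpW
          rw [hmapW] at this
          omega
        obtain ⟨U, hUC, hWU⟩ := hcov W hrW
        refine ⟨Submodule.map p.mkQ U, Finset.mem_image_of_mem _ ?_, ?_⟩
        · exact Finset.mem_filter.mpr ⟨hUC, hWU (hpW (Submodule.mem_span_singleton_self v))⟩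
        · rw [← hmapW]; exact Submodule.map_mono hWU
      calc Nj ≤ C'.card := ih (V ⧸ p) hQ C' h1 h2
        _ ≤ _ := Finset.card_image_le
    -- double counting
    set T := Finset.univ.filter (fun v : V => v ≠ 0) with hTdef
    have hTcard : T.card = q ^ (a + j + 1 + m) - 1 := by
      rw [hTdef, Finset.filter_ne', Finset.card_erase_of_mem (Finset.mem_univ 0),
        Finset.card_univ, card_eq_pow_finrank (K := F) (V := V), hV]
      rfl
    have swap : ∑ v ∈ T, (C.filter (fun U => v ∈ U)).card
        = ∑ U ∈ C, (T.filter (fun v => v ∈ U)).card := by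
      simp only [Finset.card_filter]
      rw [Finset.sum_comm]
    have inner : ∀ U ∈ C, (T.filter (fun v => v ∈ U)).card = q ^ (a + j + 1) - 1 := by
      intro U hU
      have hset : T.filter (fun v => v ∈ U)
          = (Finset.univ.filter (fun v : V => v ∈ U)).erase 0 := by
        ext x
        simp [hTdef, Finset.mem_erase, and_comm]
      rw [hset, Finset.card_erase_of_mem (by simp [U.zero_mem]),
        ← Fintype.card_subtype]
      have : Fintype.card {x // x ∈ U} = q ^ (a + j + 1) := by
        rw [card_eq_pow_finrank (K := F) (V := {x // x ∈ U})]
        congr 1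
        exact hdim U hU
      rw [this]
    have total : (q ^ (a + j + 1 + m) - 1) * Nj ≤ C.card * (q ^ (a + j + 1) - 1) := by
      calc (q ^ (a + j + 1 + m) - 1) * Nj = ∑ _v ∈ T, Nj := by
            rw [Finset.sum_const, smul_eq_mul, hTcard, mul_comm]
        _ ≤ ∑ v ∈ T, (C.filter (fun U => v ∈ U)).card := by
            apply Finset.sum_le_sum
            intro v hv
            exact key v (by simpa [hTdef] using hv)
        _ = ∑ U ∈ C, (T.filter (fun v => v ∈ U)).card := swap
        _ = C.card * (q ^ (a + j + 1) - 1) := by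
            rw [Finset.sum_congr rfl inner, Finset.sum_const, smul_eq_mul]
    -- conclude
    have hstep : q ^ m * Nj + 1 ≤ C.card := by
      apply arith_step (q ^ (a + j + 1)) (q ^ m) Nj C.card
      · exact Nat.one_lt_pow (by omega) hq
      · exact Nat.one_lt_pow (by omega) hq
      · exact hNj1
      · rw [← pow_add]
        exact total
    calc ∑ i ∈ Finset.range (j + 1 + 1), (q ^ m) ^ i = q ^ m * Nj + 1 := geom_sum_succ
      _ ≤ C.card := hstep


lemma exists_field_ext (F : Type) [Field F] [Fintype F] (m : ℕ) (hm : 0 < m) :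
    ∃ (K : Type) (_ : Field K) (_ : Algebra F K),
      FiniteDimensional F K ∧ finrank F K = m := by
  classical
  obtain ⟨p, hp⟩ := CharP.exists F
  obtain ⟨s, hps, hcard⟩ := FiniteField.card F p
  haveI : Fact p.Prime := ⟨hps⟩
  set K := GaloisField p (s * m) with hKdef
  have hsm : (s : ℕ) * m ≠ 0 := by positivity
  haveI : Fintype K := Fintype.ofFinite K
  have hcardK : Fintype.card K = p ^ ((s : ℕ) * m) := by
    rw [← Nat.card_eq_fintype_card]
    exact GaloisField.card p _ hsm
  -- the subfield of elements fixed by x ↦ x ^ p ^ s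
  haveI : CharP K p := inferInstance
  set S : Subfield K := RingHom.eqLocusField (iterateFrobenius K p s) (RingHom.id K) with hSdef
  have hmemS : ∀ x : K, x ∈ S ↔ x ^ p ^ (s : ℕ) = x := by
    intro x
    simp [hSdef, RingHom.eqLocusField, iterateFrobenius_def]
  -- S has p ^ s elements, via roots of X ^ p ^ s - X
  have hsep : (X ^ p ^ (s : ℕ) - X : (ZMod p)[X]).Separable :=
    galois_poly_separable p _ (dvd_pow_self p s.ne_zero)
  have hdvd : (X ^ p ^ (s : ℕ) - X : (ZMod p)[X]) ∣ X ^ p ^ ((s : ℕ) * m) - X := by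
    have h1 : (X ^ p ^ (s : ℕ) - X : (ZMod p)[X])
        = X * (X ^ (p ^ (s : ℕ) - 1) - 1) := by
      have h0 : 1 ≤ p ^ (s : ℕ) := Nat.one_le_iff_ne_zero.mpr (pow_ne_zero _ hps.pos.ne')
      rw [mul_sub, mul_one, ← pow_succ', Nat.sub_add_cancel h0]
    have h2 : (X ^ p ^ ((s : ℕ) * m) - X : (ZMod p)[X])
        = X * (X ^ (p ^ ((s : ℕ) * m) - 1) - 1) := by
      have h0 : 1 ≤ p ^ ((s : ℕ) * m) := Nat.one_le_iff_ne_zero.mpr (pow_ne_zero _ hps.pos.ne')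
      rw [mul_sub, mul_one, ← pow_succ', Nat.sub_add_cancel h0]
    rw [h1, h2]
    apply mul_dvd_mul_left
    obtain ⟨t, ht⟩ : p ^ (s : ℕ) - 1 ∣ p ^ ((s : ℕ) * m) - 1 := by
      have := Nat.sub_dvd_pow_sub_pow (p ^ (s : ℕ)) 1 m
      simpa [← pow_mul] using this
    rw [ht, pow_mul]
    exact sub_one_dvd_pow_sub_one _ _
  haveI : Algebra (ZMod p) K := ZMod.algebra _ _
  have hsplitsBig : Splits ((X ^ p ^ ((s : ℕ) * m) - X : (ZMod p)[X]).map (algebraMap (ZMod p) K)) := by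
    have := (FiniteField.isSplittingField_sub K (ZMod p)).splits
    rwa [hcardK] at this
  have hsplits : Splits ((X ^ p ^ (s : ℕ) - X : (ZMod p)[X]).map (algebraMap (ZMod p) K)) :=
    hsplitsBig.of_dvd (Polynomial.map_ne_zero (FiniteField.X_pow_card_pow_sub_X_ne_zero _ hsm hps.one_lt))
      (Polynomial.map_dvd _ hdvd)
  have hroot : Fintype.card ((X ^ p ^ (s : ℕ) - X : (ZMod p)[X]).rootSet K)
      = p ^ (s : ℕ) :=  by
    rw [card_rootSet_eq_natDegree hsep hsplits,
      FiniteField.X_pow_card_pow_sub_X_natDegree_eq _ s.ne_zero hps.one_lt]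
  have hSequiv : ∀ x : K, x ∈ S ↔ x ∈ (X ^ p ^ (s : ℕ) - X : (ZMod p)[X]).rootSet K := by
    intro x
    rw [hmemS, mem_rootSet]
    constructor
    · intro h
      refine ⟨FiniteField.X_pow_card_pow_sub_X_ne_zero _ s.ne_zero hps.one_lt, ?_⟩
      simp [h]
    · intro ⟨_, h⟩
      have : x ^ p ^ (s : ℕ) - x = 0 := by simpa using h
      linear_combination this
  haveI : Fintype S := Fintype.ofFinite S
  have hScard : Fintype.card S = p ^ (s : ℕ) := by
    rw [← hroot]
    exact Fintype.card_congr (Equiv.subtypeEquivRight hSequiv)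
  -- build the embedding F →+* K
  have hFS : Fintype.card F = Fintype.card S := by rw [hScard, hcard]
  let eFS : F ≃+* S := FiniteField.ringEquivOfCardEq hFS
  let emb : F →+* K := S.subtype.comp eFS.toRingHom
  letI : Algebra F K := emb.toAlgebra
  haveI hfin : FiniteDimensional F K := Module.Finite.of_finite
  refine ⟨K, inferInstance, inferInstance, hfin, ?_⟩
  have hcard2 : Fintype.card K = Fintype.card F ^ finrank F K :=
    card_eq_pow_finrank (K := F) (V := K)
  have : Fintype.card F ^ finrank F K = Fintype.card F ^ m := by
    rw [← hcard2, hcardK, hcard, ← pow_mul]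
  exact Nat.pow_right_injective Fintype.one_lt_card this

lemma exists_design (F : Type) [Field F] [Fintype F] (m r : ℕ) (hm : 0 < m) :
    ∃ C : Finset (Submodule F (Fin ((r + 1) * m) → F)),
      (∀ U ∈ C, finrank F ↥U = r * m) ∧
      (∀ W : Submodule F (Fin ((r + 1) * m) → F), finrank F ↥W = r → ∃ U ∈ C, W ≤ U) ∧
      C.card * (Fintype.card F ^ m - 1) = Fintype.card F ^ ((r + 1) * m) - 1 := by
  classical
  obtain ⟨K, _, _, hKfin, hKrank⟩ := exists_field_ext F m hm
  set q := Fintype.card F with hq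
  have hq1 : 1 < q := Fintype.one_lt_card
  haveI : Finite K := Module.finite_of_finite F
  haveI : Fintype K := Fintype.ofFinite K
  have hcardK : Fintype.card K = q ^ m := by
    rw [card_eq_pow_finrank (K := F) (V := K), hKrank]
  set V := Fin (r + 1) → K with hV
  haveI : FiniteDimensional K V := inferInstance
  haveI : FiniteDimensional F V := Module.Finite.trans K V
  have hrankKV : finrank K V = r + 1 := by
    exact (finrank_pi (R := K) (ι := Fin (r + 1))).trans (Fintype.card_fin (r + 1))
  have hrankFV : finrank F V = (r + 1) * m := by
    rw [← finrank_mul_finrank F K V, hKrank, hrankKV, mul_comm]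
  have hrankPi : finrank F (Fin ((r + 1) * m) → F) = (r + 1) * m := by
    rw [finrank_pi]; simp
  let e : (Fin ((r + 1) * m) → F) ≃ₗ[F] V :=
    LinearEquiv.ofFinrankEq _ _ (by rw [hrankPi, hrankFV])
  haveI : Finite (Dual K V) := Module.finite_of_finite K
  haveI : Fintype (Dual K V) := Fintype.ofFinite _
  -- the design
  set Φ : Dual K V → Submodule F (Fin ((r + 1) * m) → F) :=
    fun φ => Submodule.map (e.symm : V →ₗ[F] (Fin ((r + 1) * m) → F))
      (Submodule.restrictScalars F (LinearMap.ker φ)) with hΦ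
  set s0 : Finset (Dual K V) := Finset.univ.filter (fun φ => φ ≠ 0) with hs0
  refine ⟨s0.image Φ, ?_, ?_, ?_⟩
  · -- dimensions
    intro U hU
    obtain ⟨φ, hφ, rfl⟩ := Finset.mem_image.mp hU
    have hφ0 : φ ≠ 0 := by simpa [hs0] using hφ
    have hker : finrank K ↥(LinearMap.ker φ) = r := by
      have hrn := LinearMap.finrank_range_add_finrank_ker φ
      have hsurj : Function.Surjective φ := by
        obtain ⟨x, hx⟩ := DFunLike.ne_iff.mp hφ0
        simp only [LinearMap.zero_apply] at hx
        intro c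
        refine ⟨((φ x)⁻¹ * c) • x, ?_⟩
        simp only [map_smul, smul_eq_mul]
        field_simp
      rw [LinearMap.range_eq_top.mpr hsurj, finrank_top, finrank_self, hrankKV] at hrn
      omega
    have hFker : finrank F ↥(Submodule.restrictScalars F (LinearMap.ker φ)) = r * m := by
      rw [← finrank_mul_finrank F K ↥(Submodule.restrictScalars F (LinearMap.ker φ)),
        hKrank]
      rw [LinearEquiv.finrank_eq (Submodule.restrictScalarsEquiv F K V (LinearMap.ker φ)), hker,
        mul_comm]
    rw [hΦ, LinearEquiv.finrank_map_eq, hFker]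
  · -- coverage
    intro W hW
    set W' := Submodule.map (e : (Fin ((r + 1) * m) → F) →ₗ[F] V) W with hW'
    have hrW' : finrank F ↥W' = r := by rw [hW', LinearEquiv.finrank_map_eq]; exact hW
    set T := Submodule.span K ((W' : Submodule F V) : Set V) with hT
    have hTr : finrank K ↥T ≤ r := by
      haveI : FiniteDimensional F ↥W' := inferInstance
      let b := Module.finBasis F ↥W'
      have hspan : Submodule.span F (Set.range fun i => ((b i : ↥W') : V)) = W' := by
        have heq : (Set.range fun i => ((b i : ↥W') : V)) = W'.subtype '' (Set.range b) := by
          ext x; simp [Set.range_comp]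
        rw [heq, Submodule.span_image, b.span_eq, Submodule.map_top, Submodule.range_subtype]
      have h2 : Submodule.span K (Set.range fun i => ((b i : ↥W') : V)) = T := by
        rw [hT, ← Submodule.span_span_of_tower (R := F) (S := K), hspan]
      have hle : finrank K ↥(Submodule.span K (Set.range fun i => ((b i : ↥W') : V)))
          ≤ Fintype.card (Fin (finrank F ↥W')) := finrank_range_le_card _
      rw [h2] at hle
      simpa [hrW'] using hle
    have hTlt : T < ⊤ := by
      apply Submodule.lt_top_of_finrank_lt_finrank
      rw [hrankKV]; omega
    obtain ⟨φ, hφ0, hφT⟩ := Submodule.exists_dual_map_eq_bot_of_lt_top hTlt inferInstance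
    refine ⟨Φ φ, Finset.mem_image_of_mem Φ (by simp [hs0, hφ0]), ?_⟩
    have hsub : W' ≤ Submodule.restrictScalars F (LinearMap.ker φ) := by
      intro x hx
      have hxT : x ∈ T := by rw [hT]; exact Submodule.subset_span hx
      have : φ x ∈ Submodule.map φ T := ⟨x, hxT, rfl⟩
      rw [hφT] at this
      exact (Submodule.mem_bot K).mp this
    have := Submodule.map_mono (f := (e.symm : V →ₗ[F] (Fin ((r + 1) * m) → F))) hsub
    rw [hW'] at this
    rw [← Submodule.map_comp] at this
    have hid : ((e.symm : V →ₗ[F] (Fin ((r + 1) * m) → F)).comp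
        (e : (Fin ((r + 1) * m) → F) →ₗ[F] V)) = LinearMap.id := by
      ext x; simp
    rw [hid, Submodule.map_id] at this
    exact this
  · -- cardinality
    have hfiber : ∀ b ∈ s0.image Φ, (s0.filter (fun ψ => Φ ψ = b)).card = q ^ m - 1 := by
      intro b hb
      obtain ⟨φ0, hφ0s, rfl⟩ := Finset.mem_image.mp hb
      have hφ00 : φ0 ≠ 0 := by simpa [hs0] using hφ0s
      have hset : s0.filter (fun ψ => Φ ψ = Φ φ0)
          = (Finset.univ.filter (fun c : K => c ≠ 0)).image (fun c => c • φ0) := by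
        ext ψ
        simp only [hs0, Finset.mem_filter, Finset.mem_image, Finset.mem_univ, true_and]
        constructor
        · rintro ⟨hψ0, hΦeq⟩
          have hkereq : LinearMap.ker ψ = LinearMap.ker φ0 := by
            have h1 := Submodule.map_injective_of_injective
              (f := (e.symm : V →ₗ[F] (Fin ((r + 1) * m) → F))) e.symm.injective hΦeq
            exact Submodule.restrictScalars_injective F K V h1
          have hmem : ψ ∈ Submodule.span K (Set.range fun _ : Unit => φ0) := by
            apply FiniteDimensional.mem_span_of_iInf_ker_le_ker (L := fun _ : Unit => φ0)
            rw [iInf_const, hkereq]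
          rw [Set.range_const, Submodule.mem_span_singleton] at hmem
          obtain ⟨c, hc⟩ := hmem
          refine ⟨c, ?_, hc⟩
          intro h0
          exact hψ0 (by rw [← hc, h0, zero_smul])
        · rintro ⟨c, hc0, rfl⟩
          refine ⟨?_, ?_⟩
          · exact smul_ne_zero hc0 hφ00
          · simp only [hΦ]
            rw [LinearMap.ker_smul _ c hc0]
      rw [hset, Finset.card_image_of_injective _ (smul_left_injective K hφ00)]
      rw [Finset.filter_ne', Finset.card_erase_of_mem (Finset.mem_univ 0), Finset.card_univ,
        hcardK]
    have hs0card : s0.card = q ^ ((r + 1) * m) - 1 := by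
      have hcardDual : Fintype.card (Dual K V) = q ^ ((r + 1) * m) := by
        rw [card_eq_pow_finrank (K := K) (V := Dual K V), Subspace.dual_finrank_eq, hrankKV,
          hcardK, ← pow_mul, mul_comm]
      rw [hs0, Finset.filter_ne', Finset.card_erase_of_mem (Finset.mem_univ 0),
        Finset.card_univ, hcardDual]
    calc (s0.image Φ).card * (q ^ m - 1)
        = ∑ _b ∈ s0.image Φ, (q ^ m - 1) := by rw [Finset.sum_const, smul_eq_mul]
      _ = ∑ b ∈ s0.image Φ, (s0.filter (fun ψ => Φ ψ = b)).card :=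
          (Finset.sum_congr rfl hfiber).symm
      _ = s0.card := (Finset.card_eq_sum_card_fiberwise (fun x hx => Finset.mem_image_of_mem Φ hx)).symm
      _ = q ^ ((r + 1) * m) - 1 := hs0card


/-- If `r+1` divides `n` then `𝒞_q(n, n - n/(r+1), r) = (q^n-1)/(q^(n/(r+1))-1)`. -/
theorem cover_spread (F : Type) [Field F] [Fintype F] (n r : ℕ)
    (hn : 0 < n) (hr : 0 < r) (hdvd : (r + 1) ∣ n) :
    (minCoverSize F n (n - n / (r + 1)) r : ℝ) =
      ((Fintype.card F : ℝ) ^ n - 1) / ((Fintype.card F : ℝ) ^ (n / (r + 1)) - 1) := by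
  obtain ⟨m, rfl⟩ := hdvd
  rcases Nat.eq_zero_or_pos m with rfl | hm
  · simp at hn
  set q := Fintype.card F with hq
  have hq1 : 1 < q := Fintype.one_lt_card
  have hdiv : (r + 1) * m / (r + 1) = m := Nat.mul_div_cancel_left m (Nat.succ_pos r)
  have hk : (r + 1) * m - (r + 1) * m / (r + 1) = r * m := by
    rw [hdiv]; cases m with
    | zero => omega
    | succ m' => have : (r + 1) * (m' + 1) = r * (m' + 1) + (m' + 1) := by ring
                 omega
  set N := ∑ i ∈ Finset.range (r + 1), (q ^ m) ^ i with hN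
  have hq1m : 1 ≤ q ^ m := Nat.one_le_pow _ _ (by omega)
  have hq1nm : 1 ≤ q ^ ((r + 1) * m) := Nat.one_le_pow _ _ (by omega)
  have hgeom : N * (q ^ m - 1) = q ^ ((r + 1) * m) - 1 := by
    have h := geom_sum_mul ((q : ℤ) ^ m) (r + 1)
    rw [← pow_mul, mul_comm m (r + 1)] at h
    have : (N : ℤ) * ((q : ℤ) ^ m - 1) = (q : ℤ) ^ ((r + 1) * m) - 1 := by
      rw [hN]; push_cast; exact h
    have h2 : ((N * (q ^ m - 1) : ℕ) : ℤ) = ((q ^ ((r + 1) * m) - 1 : ℕ) : ℤ) := by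
      push_cast [hq1m, hq1nm]
      exact this
    exact_mod_cast h2
  obtain ⟨C, hC1, hC2, hC3⟩ := exists_design F m r hm
  rw [← hq] at hC3
  have hq2m : 1 < q ^ m := Nat.one_lt_pow (by omega) hq1
  have hCcard : C.card = N := by
    have := hC3.trans hgeom.symm
    exact Nat.eq_of_mul_eq_mul_right (by omega) this
  have hmem : N ∈ {M | ∃ C : Finset (Submodule F (Fin ((r + 1) * m) → F)),
      IsCoveringDesign F ((r + 1) * m) ((r + 1) * m - (r + 1) * m / (r + 1)) r C ∧
        C.card = M} := by
    refine ⟨C, ⟨?_, hC2⟩, hCcard⟩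
    intro U hU
    rw [hk]
    exact hC1 U hU
  have hlow : ∀ M ∈ {M | ∃ C : Finset (Submodule F (Fin ((r + 1) * m) → F)),
      IsCoveringDesign F ((r + 1) * m) ((r + 1) * m - (r + 1) * m / (r + 1)) r C ∧
        C.card = M}, N ≤ M := by
    rintro M ⟨C', ⟨hd, hc⟩, rfl⟩
    obtain ⟨m', rfl⟩ : ∃ m', m = m' + 1 := ⟨m - 1, by omega⟩
    have harr : (r + 1) * (m' + 1) = r * m' + r + (m' + 1) := by ring
    have hfr : finrank F (Fin ((r + 1) * (m' + 1)) → F) = r * m' + r + (m' + 1) := by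
      rw [finrank_pi, Fintype.card_fin, harr]
    have hdims : ∀ U ∈ C', finrank F ↥U = r * m' + r := by
      intro U hU
      have := hd U hU
      rw [hk] at this
      rw [this]; ring
    exact cover_lower_bound F (r * m') (m' + 1) (Nat.succ_pos m') r _ hfr C' hdims hc
  have hval : minCoverSize F ((r + 1) * m) ((r + 1) * m - (r + 1) * m / (r + 1)) r = N := by
    apply le_antisymm
    · exact Nat.sInf_le hmem
    · exact hlow _ (Nat.sInf_mem ⟨N, hmem⟩)
  rw [hval, hdiv]
  have hq1mR : (1 : ℝ) < (q : ℝ) ^ m := by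
    have : (1 : ℝ) < (q : ℝ) := by exact_mod_cast hq1
    exact one_lt_pow₀ this (by omega)
  rw [eq_div_iff (by linarith)]
  have := hgeom
  have hcast : (N : ℝ) * ((q : ℝ) ^ m - 1) = (q : ℝ) ^ ((r + 1) * m) - 1 := by
    have h2 : ((N * (q ^ m - 1) : ℕ) : ℝ) = ((q ^ ((r + 1) * m) - 1 : ℕ) : ℝ) := by
      exact_mod_cast congrArg (Nat.cast : ℕ → ℝ) hgeom
    push_cast [hq1m, hq1nm] at h2
    exact h2
  exact hcast
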